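/- Let (q_n)_{n≥1} be integers with q_n ≥ 2 and set p_n = q_1⋯q_n. The odometer (ℤ_{(q_n)}, R), where R is addition of 1, is self-induced if and only if there exists a prime q dividing infinitely many of the q_n, i.e., lim_n max{k : q^k divides p_n} = ∞. -/

import Mathlib

open Set

/-- Return time function `r_A(x) = inf {n > 0 : Tⁿ x ∈ A}`. -/
noncomputable def retTime {α : Type*} (T : α → α) (A : Set α) (x : α) : ℕ :=
  sInf {n : ℕ | 0 < n ∧ T^[n] x ∈ A}

/-- Partial products `p_n = q_1 ⋯ q_n` (indexed from 0: `pp q n = q 0 * ⋯ * q n`). -/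
def pp (q : ℕ → ℕ) (n : ℕ) : ℕ := ∏ i ∈ Finset.range (n + 1), q i

theorem pp_dvd (q : ℕ → ℕ) (n : ℕ) : pp q n ∣ pp q (n + 1) := by
  simp [pp, Finset.prod_range_succ]

instance (n : ℕ) : TopologicalSpace (ZMod n) := ⊥
instance (n : ℕ) : DiscreteTopology (ZMod n) := ⟨rfl⟩

/-- The `(q_n)`-adic integers: the inverse limit of the `ℤ/p_nℤ`. -/
abbrev Odo (q : ℕ → ℕ) : Type :=
  {x : ∀ n, ZMod (pp q n) // ∀ n, ZMod.castHom (pp_dvd q n) (ZMod (pp q n)) (x (n + 1)) = x n}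

/-- The odometer map: addition of `1`. -/
def odoR (q : ℕ → ℕ) : Odo q → Odo q :=
  fun x => ⟨fun n => x.1 n + 1, fun n => by rw [map_add, map_one, x.2 n]⟩

section Infra
variable {q : ℕ → ℕ}

theorem two_le_pp (hq : ∀ n, 2 ≤ q n) (n : ℕ) : 2 ≤ pp q n := by
  induction n with
  | zero => simpa [pp] using hq 0
  | succ n ih =>
    have : pp q (n+1) = pp q n * q (n+1) := by simp [pp, Finset.prod_range_succ]
    rw [this]
    calc 2 ≤ pp q n := ih
    _ ≤ pp q n * q (n+1) := Nat.le_mul_of_pos_right _ (lt_of_lt_of_le (by norm_num) (hq (n+1)))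

theorem pp_pos (hq : ∀ n, 2 ≤ q n) (n : ℕ) : 0 < pp q n :=
  lt_of_lt_of_le (by norm_num) (two_le_pp hq n)

theorem neZero_pp (hq : ∀ n, 2 ≤ q n) (n : ℕ) : NeZero (pp q n) :=
  ⟨(pp_pos hq n).ne'⟩

theorem pp_dvd_of_le {n m : ℕ} (h : n ≤ m) : pp q n ∣ pp q m :=
  Finset.prod_dvd_prod_of_subset _ _ _ (Finset.range_subset_range.2 (by omega))

/-- compatibility along the tower -/
theorem odo_compat (hq : ∀ n, 2 ≤ q n) (x : Odo q) {n m : ℕ} (h : n ≤ m) :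
    (((x.1 m).val : ℕ) : ZMod (pp q n)) = x.1 n := by
  induction m with
  | zero =>
    have hn : n = 0 := Nat.le_zero.1 h
    subst hn
    haveI := neZero_pp hq 0
    exact ZMod.natCast_rightInverse _
  | succ m ih =>
    rcases Nat.lt_or_ge n (m+1) with hlt | hge
    · have hnm : n ≤ m := by omega
      haveI := neZero_pp hq m
      haveI := neZero_pp hq (m+1)
      have h2 : ((x.1 (m+1)).val : ZMod (pp q m)) = x.1 m := by
        have := x.2 m
        rwa [ZMod.castHom_apply, ← ZMod.natCast_val] at this
      have hv : (x.1 m).val = (x.1 (m+1)).val % pp q m := by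
        rw [← h2, ZMod.val_natCast]
      have : (((x.1 (m+1)).val : ℕ) : ZMod (pp q n)) = (((x.1 (m+1)).val % pp q m + pp q m * ((x.1 (m+1)).val / pp q m) : ℕ) : ZMod (pp q n)) := by
        rw [Nat.mod_add_div]
      rw [this]
      push_cast
      rw [(ZMod.natCast_eq_zero_iff (pp q m) (pp q n)).2 (pp_dvd_of_le hnm)]
      rw [← hv] at *
      simpa using ih hnm
    · have hn : n = m + 1 := by omega
      subst hn
      haveI := neZero_pp hq (m+1)
      exact ZMod.natCast_rightInverse _

/-- the natural number embedding -/
def odoNat (q : ℕ → ℕ) (t : ℕ) : Odo q :=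
  ⟨fun n => (t : ZMod (pp q n)), fun n => by simp⟩

theorem pi_surjective (hq : ∀ n, 2 ≤ q n) (n : ℕ) :
    Function.Surjective (fun x : Odo q => x.1 n) := by
  intro a
  haveI := neZero_pp hq n
  exact ⟨odoNat q a.val, ZMod.natCast_rightInverse a⟩

theorem pi_R (x : Odo q) (n : ℕ) : (odoR q x).1 n = x.1 n + 1 := rfl

theorem pi_R_iterate (x : Odo q) (n t : ℕ) :
    ((odoR q)^[t] x).1 n = x.1 n + (t : ZMod (pp q n)) := by
  induction t with
  | zero => simp
  | succ t ih =>
    rw [Function.iterate_succ_apply', pi_R, ih]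
    push_cast
    ring

def odoRinv (q : ℕ → ℕ) : Odo q → Odo q :=
  fun x => ⟨fun n => x.1 n - 1, fun n => by rw [map_sub, map_one, x.2 n]⟩

theorem R_Rinv (x : Odo q) : odoR q (odoRinv q x) = x := by
  apply Subtype.ext; funext n
  show x.1 n - 1 + 1 = x.1 n
  ring

theorem R_iterate_Rinv_iterate (t : ℕ) (x : Odo q) :
    (odoR q)^[t] ((odoRinv q)^[t] x) = x :=
  (Function.rightInverse_iff_comp.2 (funext R_Rinv)).iterate t x

theorem continuous_pi_n (q : ℕ → ℕ) (n : ℕ) : Continuous (fun x : Odo q => x.1 n) :=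
  (continuous_apply n).comp continuous_subtype_val

end Infra

section Topo
variable {q : ℕ → ℕ}

theorem compactSpace_odo (hq : ∀ n, 2 ≤ q n) : CompactSpace (Odo q) := by
  haveI : ∀ n, NeZero (pp q n) := fun n => neZero_pp hq n
  haveI : ∀ n, Finite (ZMod (pp q n)) := fun n => inferInstance
  haveI : ∀ n, CompactSpace (ZMod (pp q n)) := fun n => inferInstance
  have hcl : IsClosed {x : ∀ n, ZMod (pp q n) |
      ∀ n, ZMod.castHom (pp_dvd q n) (ZMod (pp q n)) (x (n + 1)) = x n} := by
    have : {x : ∀ n, ZMod (pp q n) |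
        ∀ n, ZMod.castHom (pp_dvd q n) (ZMod (pp q n)) (x (n + 1)) = x n} =
        ⋂ n, {x | ZMod.castHom (pp_dvd q n) (ZMod (pp q n)) (x (n + 1)) = x n} := by
      ext x; simp [Set.mem_iInter]
    rw [this]
    refine isClosed_iInter fun n => isClosed_eq ?_ (continuous_apply n)
    exact (continuous_of_discreteTopology).comp (continuous_apply (n+1))
  exact isCompact_iff_compactSpace.mp hcl.isCompact

/-- every clopen set is determined by a single coordinate -/
theorem clopen_determined (hq : ∀ n, 2 ≤ q n) {A : Set (Odo q)} (hA : IsClopen A) :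
    ∃ N : ℕ, ∀ x y : Odo q, x ∈ A → y.1 N = x.1 N → y ∈ A := by
  haveI := compactSpace_odo hq
  -- each point of A has a determining level
  have key : ∀ x : Odo q, x ∈ A → ∃ N, ∀ y : Odo q, y.1 N = x.1 N → y ∈ A := by
    intro x hx
    obtain ⟨U, hU, hUA⟩ := isOpen_induced_iff.1 hA.2
    have hxU : x.1 ∈ U := by rw [← hUA] at hx; exact hx
    obtain ⟨I, u, hu, hsub⟩ := isOpen_pi_iff.1 hU x.1 hxU
    refine ⟨I.sup id, fun y hy => ?_⟩
    have : y.1 ∈ (I : Set ℕ).pi u := by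
      intro i hi
      have hiN : i ≤ I.sup id := Finset.le_sup (f := id) hi
      have h1 : y.1 i = x.1 i := by
        rw [← odo_compat hq y hiN, ← odo_compat hq x hiN, hy]
      rw [h1]
      exact (hu i hi).2
    rw [← hUA]
    exact hsub this
  choose! N hN using key
  -- compactness
  have hcov : A ⊆ ⋃ (i : A), {y : Odo q | y.1 (N i) = (i : Odo q).1 (N i)} := by
    intro x hx
    exact Set.mem_iUnion.2 ⟨⟨x, hx⟩, rfl⟩
  have hopen : ∀ i : A, IsOpen {y : Odo q | y.1 (N i) = (i : Odo q).1 (N i)} := by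
    intro i
    exact (isClopen_discrete {(i : Odo q).1 (N i)}).preimage (continuous_pi_n q (N i)) |>.2
  obtain ⟨t, ht⟩ := hA.1.isCompact.elim_finite_subcover _ hopen hcov
  refine ⟨t.sup (fun i : A => N (i : Odo q)), fun x y hx hy => ?_⟩
  obtain ⟨i, hit, hxi⟩ := Set.mem_iUnion₂.1 (ht hx)
  have hle : N i ≤ t.sup (fun i => N i) := Finset.le_sup (f := fun i : A => N i) hit
  have h1 : y.1 (N i) = x.1 (N i) := by
    rw [← odo_compat hq y hle, ← odo_compat hq x hle, hy]
  exact hN i i.2 y (h1.trans hxi)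

end Topo

section Reverse
variable {q : ℕ → ℕ}

theorem val_compat (hq : ∀ n, 2 ≤ q n) (x : Odo q) {n m : ℕ} (h : n ≤ m) :
    (x.1 n).val = (x.1 m).val % pp q n := by
  rw [← odo_compat hq x h, ZMod.val_natCast]

theorem div_indep (hq : ∀ n, 2 ≤ q n) {ℓ : ℕ} (hℓ : 0 < ℓ) (x : Odo q) {n m m' : ℕ}
    (hm : n < m) (hmm' : m ≤ m') (hqm : ℓ ∣ q m) (hvm : ℓ ∣ (x.1 m).val) :
    (((x.1 m').val / ℓ : ℕ) : ZMod (pp q n)) = (((x.1 m).val / ℓ : ℕ) : ZMod (pp q n)) := by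
  obtain ⟨k, rfl⟩ : ∃ k, m = k + 1 := ⟨m - 1, by omega⟩
  obtain ⟨c, hc⟩ := hqm
  obtain ⟨w, hw⟩ := hvm
  set v' := (x.1 m').val with hv'
  set v := (x.1 (k+1)).val with hv
  have hsplit : pp q (k+1) = pp q k * q (k+1) := by simp [pp, Finset.prod_range_succ]
  have hvmod : v = v' % pp q (k+1) := val_compat hq x hmm'
  set d := v' / pp q (k+1) with hd
  have hdecomp : v' = ℓ * ((pp q k * c) * d + w) := by
    have h1 : v + pp q (k+1) * d = v' := by rw [hvmod, hd]; exact Nat.mod_add_div _ _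
    rw [← h1, hw, hsplit, hc]
    ring
  have hdiv : v' / ℓ = (pp q k * c) * d + w := by
    conv_lhs => rw [hdecomp]
    rw [Nat.mul_div_cancel_left _ hℓ]
  have hwdiv : v / ℓ = w := by rw [hw, Nat.mul_div_cancel_left _ hℓ]
  rw [hdiv, hwdiv]
  push_cast
  have h0 : ((pp q k : ℕ) : ZMod (pp q n)) = 0 :=
    (ZMod.natCast_eq_zero_iff _ _).2 (pp_dvd_of_le (by omega))
  rw [h0]
  ring

theorem reverse_dir (hq : ∀ n, 2 ≤ q n) {ℓ : ℕ} (hℓ : ℓ.Prime)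
    (hinf : {n : ℕ | ℓ ∣ q n}.Infinite) :
    ∃ C : Set (Odo q), IsClopen C ∧ C.Nonempty ∧ C ≠ Set.univ ∧
      ∃ φ : Odo q → Odo q, Continuous φ ∧ Function.Injective φ ∧ Set.range φ = C ∧
        ∀ x : Odo q, φ (odoR q x) = (odoR q)^[retTime (odoR q) C (φ x)] (φ x) := by
  haveI : ∀ n, NeZero (pp q n) := fun n => neZero_pp hq n
  obtain ⟨k0, hk0⟩ := hinf.nonempty
  have hk0' : ℓ ∣ q k0 := hk0
  have hℓpp : ℓ ∣ pp q k0 :=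
    hk0'.trans (Finset.dvd_prod_of_mem q (by simp : k0 ∈ Finset.range (k0+1)))
  -- choice of next good index
  have hnext : ∀ n, ∃ m, n < m ∧ k0 ≤ m ∧ ℓ ∣ q m := by
    intro n
    obtain ⟨b, hb, hlt⟩ := hinf.exists_gt (max n k0)
    exact ⟨b, by omega, by omega, hb⟩
  choose m hm1 hm2 hm3 using hnext
  -- the clopen set
  set C : Set (Odo q) := {x : Odo q | ℓ ∣ (x.1 k0).val} with hC
  -- divisibility propagates up the tower
  have hval : ∀ x : Odo q, x ∈ C → ∀ j, k0 ≤ j → ℓ ∣ (x.1 j).val := by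
    intro x hx j hj
    have hx' : ℓ ∣ (x.1 k0).val := hx
    rw [val_compat hq x hj] at hx'
    exact (Nat.dvd_mod_iff hℓpp).1 hx'
  -- the map φ = multiplication by ℓ
  set φ : Odo q → Odo q := fun x =>
    ⟨fun n => (ℓ : ZMod (pp q n)) * x.1 n, fun n => by
      rw [map_mul, map_natCast, x.2 n]⟩ with hφ
  have hφcoord : ∀ x n, (φ x).1 n = (ℓ : ZMod (pp q n)) * x.1 n := fun x n => rfl
  -- ℓ divides val of coordinates of φ x at high levels
  have hφdvd : ∀ (x : Odo q) (j : ℕ), k0 ≤ j → ℓ ∣ ((φ x).1 j).val := by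
    intro x j hj
    have hℓpj : ℓ ∣ pp q j := hℓpp.trans (pp_dvd_of_le hj)
    rw [hφcoord, ZMod.val_mul, ZMod.val_natCast]
    refine (Nat.dvd_mod_iff hℓpj).2 (Dvd.dvd.mul_right ?_ _)
    exact (Nat.dvd_mod_iff hℓpj).2 dvd_rfl
  -- range φ = C
  have hrange : Set.range φ = C := by
    apply Set.Subset.antisymm
    · rintro _ ⟨x, rfl⟩
      exact hφdvd x k0 le_rfl
    · intro x hx
      -- construct the preimage
      refine ⟨⟨fun n => (((x.1 (m n)).val / ℓ : ℕ) : ZMod (pp q n)), ?_⟩, ?_⟩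
      · intro n
        rw [map_natCast]
        have e1 := div_indep hq hℓ.pos x (hm1 n) (le_max_left (m n) (m (n+1)))
          (hm3 n) (hval x hx _ (hm2 n))
        have e2 := div_indep hq hℓ.pos x (show n < m (n+1) by have := hm1 (n+1); omega)
          (le_max_right (m n) (m (n+1))) (hm3 (n+1)) (hval x hx _ (hm2 (n+1)))
        show (((x.1 (m (n+1))).val / ℓ : ℕ) : ZMod (pp q n)) =
          (((x.1 (m n)).val / ℓ : ℕ) : ZMod (pp q n))
        rw [← e2]
        exact e1
      · apply Subtype.ext
        funext n
        show (ℓ : ZMod (pp q n)) * (((x.1 (m n)).val / ℓ : ℕ) : ZMod (pp q n)) = x.1 n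
        rw [← Nat.cast_mul, Nat.mul_div_cancel' (hval x hx _ (hm2 n)),
          odo_compat hq x (le_of_lt (hm1 n))]
  -- injectivity of φ
  have hinj : Function.Injective φ := by
    intro y y' h
    apply Subtype.ext
    funext n
    set a := y.1 (m n) with ha
    set b := y'.1 (m n) with hb
    have hab : (ℓ : ZMod (pp q (m n))) * a = (ℓ : ZMod (pp q (m n))) * b := by
      have := congrArg (fun z => z.1 (m n)) h
      simpa [hφcoord] using this
    have hz : (ℓ : ZMod (pp q (m n))) * (a - b) = 0 := by rw [mul_sub, hab, sub_self]
    have hdvd1 : pp q (m n) ∣ ℓ * (a - b).val := by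
      rw [← ZMod.natCast_eq_zero_iff]
      push_cast
      rw [ZMod.natCast_val, ZMod.cast_id]
      exact hz
    -- pp q (m n) = ℓ * p' with pp q n ∣ p'
    obtain ⟨k, hk⟩ : ∃ k, m n = k + 1 := ⟨m n - 1, by have := hm1 n; omega⟩
    obtain ⟨c, hc⟩ := hm3 n
    have hsplit : pp q (m n) = ℓ * (pp q k * c) := by
      rw [hk] at hc ⊢
      rw [show pp q (k+1) = pp q k * q (k+1) by simp [pp, Finset.prod_range_succ], hc]
      ring
    have hdvd2 : pp q n ∣ (a - b).val := by
      have h2 : ℓ * (pp q k * c) ∣ ℓ * (a - b).val := by rw [← hsplit]; exact hdvd1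
      have h3 : pp q k * c ∣ (a - b).val :=
        (mul_dvd_mul_iff_left (hℓ.pos.ne' : (ℓ:ℕ) ≠ 0)).1 h2
      have h4 := hm1 n
      exact (pp_dvd_of_le (by omega : n ≤ k)).trans ((dvd_mul_right _ _).trans h3)
    have hcast : y.1 n - y'.1 n = (((a - b).val : ℕ) : ZMod (pp q n)) := by
      rw [ZMod.natCast_val]
      have hfa : ((a - b).cast : ZMod (pp q n)) = a.cast - b.cast := by
        have := map_sub (ZMod.castHom (pp_dvd_of_le (le_of_lt (hm1 n))) (ZMod (pp q n))) a b
        simpa [ZMod.castHom_apply] using this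
      rw [hfa, ← ZMod.natCast_val, ← ZMod.natCast_val,
        odo_compat hq y (le_of_lt (hm1 n)), odo_compat hq y' (le_of_lt (hm1 n))]
    have : y.1 n - y'.1 n = 0 := by
      rw [hcast, ZMod.natCast_eq_zero_iff]
      exact hdvd2
    linear_combination this
  -- retTime at points of range φ equals ℓ
  have hret : ∀ x : Odo q, retTime (odoR q) C (φ x) = ℓ := by
    intro x
    have hset : {t : ℕ | 0 < t ∧ (odoR q)^[t] (φ x) ∈ C} = {t : ℕ | 0 < t ∧ ℓ ∣ t} := by
      ext t
      simp only [Set.mem_setOf_eq, and_congr_right_iff]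
      intro _
      have h1 : ((odoR q)^[t] (φ x)).1 k0 = (φ x).1 k0 + (t : ZMod (pp q k0)) :=
        pi_R_iterate _ _ _
      have h2 : (((φ x).1 k0 + (t : ZMod (pp q k0))).val) =
          (((φ x).1 k0).val + t % pp q k0) % pp q k0 := by
        rw [ZMod.val_add, ZMod.val_natCast]
      constructor
      · intro ht
        have ht' : ℓ ∣ (((φ x).1 k0).val + t % pp q k0) % pp q k0 := by
          rw [← h2, ← h1]; exact ht
        have := (Nat.dvd_mod_iff hℓpp).1 ht'
        have := (Nat.dvd_add_right (hφdvd x k0 le_rfl)).1 this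
        exact (Nat.dvd_mod_iff hℓpp).1 this
      · intro ht
        show ℓ ∣ (((odoR q)^[t] (φ x)).1 k0).val
        rw [h1, h2]
        refine (Nat.dvd_mod_iff hℓpp).2 ?_
        exact Nat.dvd_add (hφdvd x k0 le_rfl) ((Nat.dvd_mod_iff hℓpp).2 ht)
    have : retTime (odoR q) C (φ x) = sInf {t : ℕ | 0 < t ∧ ℓ ∣ t} := by
      unfold retTime
      rw [hset]
    rw [this]
    apply le_antisymm
    · exact Nat.sInf_le ⟨hℓ.pos, dvd_rfl⟩
    · exact le_csInf ⟨ℓ, hℓ.pos, dvd_rfl⟩ (fun t ht => Nat.le_of_dvd ht.1 ht.2)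
  refine ⟨C, ?_, ?_, ?_, φ, ?_, hinj, hrange, ?_⟩
  · have : C = (fun x : Odo q => x.1 k0) ⁻¹' {a : ZMod (pp q k0) | ℓ ∣ a.val} := rfl
    rw [this]
    exact (isClopen_discrete _).preimage (continuous_pi_n q k0)
  · refine ⟨odoNat q 0, ?_⟩
    show ℓ ∣ (((0:ℕ) : ZMod (pp q k0))).val
    simp
  · intro hCuniv
    have h1 : odoNat q 1 ∈ C := hCuniv ▸ Set.mem_univ _
    have h2 : ℓ ∣ (((1:ℕ) : ZMod (pp q k0))).val := h1
    rw [ZMod.val_natCast, Nat.mod_eq_of_lt (by have := two_le_pp hq k0; omega)] at h2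
    have := Nat.le_of_dvd one_pos h2
    have := hℓ.one_lt
    omega
  · refine Continuous.subtype_mk ?_ _
    apply continuous_pi
    intro n
    exact continuous_const.mul ((continuous_apply n).comp continuous_subtype_val)
  · intro x
    rw [hret x]
    apply Subtype.ext
    funext n
    rw [pi_R_iterate]
    show (ℓ : ZMod (pp q n)) * (x.1 n + 1) = (ℓ : ZMod (pp q n)) * x.1 n + ℓ
    ring

end Reverse

section Forward
variable {q : ℕ → ℕ}

theorem determined_mono (hq : ∀ n, 2 ≤ q n) {Y : Set (Odo q)} {L L' : ℕ} (h : L ≤ L')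
    (hY : ∀ x y : Odo q, x ∈ Y → y.1 L = x.1 L → y ∈ Y) :
    ∀ x y : Odo q, x ∈ Y → y.1 L' = x.1 L' → y ∈ Y := by
  intro x y hx hxy
  refine hY x y hx ?_
  rw [← odo_compat hq y h, ← odo_compat hq x h, hxy]

theorem determined_preimage {Y : Set (Odo q)} {L : ℕ}
    (hY : ∀ x y : Odo q, x ∈ Y → y.1 L = x.1 L → y ∈ Y) :
    Y = (fun z : Odo q => z.1 L) ⁻¹' ((fun z : Odo q => z.1 L) '' Y) := by
  apply Set.Subset.antisymm
  · intro x hx; exact ⟨x, hx, rfl⟩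
  · rintro x ⟨c, hc, hcx⟩
    exact hY c x hc hcx.symm

/-- card of pairwise disjoint union -/
theorem ncard_pairwise_biUnion {α : Type*} [Finite α] {ι : Type*} [DecidableEq ι]
    (s : Finset ι) (T : ι → Set α)
    (h : ∀ i ∈ s, ∀ j ∈ s, i ≠ j → T i ∩ T j = ∅) :
    (⋃ i ∈ s, T i).ncard = ∑ i ∈ s, (T i).ncard := by
  classical
  induction s using Finset.induction_on with
  | empty => simp
  | @insert a s ha ih =>
    rw [Finset.sum_insert ha]
    have hu : (⋃ i ∈ insert a s, T i) = T a ∪ ⋃ i ∈ s, T i := by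
      simp [Set.biUnion_insert]
    rw [hu, Set.ncard_union_eq ?_ (Set.toFinite _) (Set.toFinite _)]
    · rw [ih (fun i hi j hj hij => h i (Finset.mem_insert_of_mem hi) j
        (Finset.mem_insert_of_mem hj) hij)]
    · refine Set.disjoint_left.2 fun z hza hzs => ?_
      obtain ⟨i, hi, hzi⟩ := Set.mem_iUnion₂.1 hzs
      have he := h a (Finset.mem_insert_self a s) i (Finset.mem_insert_of_mem hi)
        (fun hai => ha (hai ▸ hi))
      exact Set.eq_empty_iff_forall_notMem.1 he z ⟨hza, hzi⟩

/-- counting preimages under a surjective additive hom on finite types -/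
theorem ncard_preimage_castHom {n n' : ℕ} [NeZero n] [NeZero n'] (h : n ∣ n')
    (S : Set (ZMod n)) :
    ((ZMod.castHom h (ZMod n)) ⁻¹' S).ncard =
      S.ncard * ((ZMod.castHom h (ZMod n)) ⁻¹' {0}).ncard := by
  classical
  set f := ZMod.castHom h (ZMod n) with hf
  have hfib : ∀ b : ZMod n, (f ⁻¹' {b}).ncard = (f ⁻¹' {0}).ncard := by
    intro b
    have hx0 : f ((b.val : ℕ) : ZMod n') = b := by
      rw [map_natCast]
      exact ZMod.natCast_rightInverse b
    set x0 := ((b.val : ℕ) : ZMod n') with hx0d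
    have himg : f ⁻¹' {b} = (fun t => x0 + t) '' (f ⁻¹' {0}) := by
      ext z
      constructor
      · intro hz
        refine ⟨z - x0, ?_, by ring⟩
        have : f z = b := hz
        simp [map_sub, this, hx0]
      · rintro ⟨t, ht, rfl⟩
        have : f t = 0 := ht
        simp [map_add, hx0, this]
    rw [himg, Set.ncard_image_of_injective _ (add_right_injective x0)]
  have hS := S.toFinite
  have hu : f ⁻¹' S = ⋃ b ∈ hS.toFinset, f ⁻¹' {b} := by
    ext z
    simp only [Set.mem_preimage, Set.mem_iUnion, hS.mem_toFinset, Set.mem_singleton_iff]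
    exact ⟨fun hz => ⟨f z, hz, rfl⟩, fun ⟨b, hb, hb'⟩ => hb' ▸ hb⟩
  rw [hu, ncard_pairwise_biUnion _ _ (by
    intro i _ j _ hij
    ext z
    simp only [Set.mem_inter_iff, Set.mem_preimage, Set.mem_singleton_iff, Set.mem_empty_iff_false,
      iff_false, not_and]
    intro h1 h2
    exact hij (h1 ▸ h2 ▸ rfl))]
  rw [Finset.sum_congr rfl (fun b _ => hfib b), Finset.sum_const, smul_eq_mul,
    ← Set.ncard_eq_toFinset_card S hS]

end Forward

theorem forward_dir {q : ℕ → ℕ} (hq : ∀ n, 2 ≤ q n)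
    (C : Set (Odo q)) (hC : IsClopen C) (hne : C.Nonempty) (hnuniv : C ≠ Set.univ)
    (φ : Odo q → Odo q) (hcont : Continuous φ) (hinj : Function.Injective φ)
    (hrange : Set.range φ = C)
    (heq : ∀ x, φ (odoR q x) = (odoR q)^[retTime (odoR q) C (φ x)] (φ x))
    (hfin : ∀ ℓ : ℕ, ℓ.Prime → {n : ℕ | ℓ ∣ q n}.Finite) : False := by
  classical
  haveI hNZ : ∀ n, NeZero (pp q n) := fun n => neZero_pp hq n
  haveI := compactSpace_odo hq
  haveI : ∀ n, Finite (ZMod (pp q n)) := fun n => inferInstance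
  -- level of C
  obtain ⟨N, hdetN⟩ := clopen_determined hq hC
  set U : Set (ZMod (pp q N)) := (fun z : Odo q => z.1 N) '' C with hU
  have hCU : C = (fun z : Odo q => z.1 N) ⁻¹' U := determined_preimage hdetN
  set u : ℕ := U.ncard with hu
  have hUne : U.Nonempty := hne.image _
  have hune : u ≠ 0 := by
    have := (Set.ncard_pos (Set.toFinite U)).2 hUne
    omega
  have hUssub : U ⊂ Set.univ := by
    refine ⟨Set.subset_univ _, fun hsub => hnuniv ?_⟩
    have : U = Set.univ := Set.Subset.antisymm (Set.subset_univ _) hsub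
    rw [hCU, this, Set.preimage_univ]
  have hult : u < pp q N := by
    have := Set.ncard_lt_ncard hUssub (Set.toFinite _)
    rwa [Set.ncard_univ, Nat.card_zmod] at this
  -- choose the prime ℓ
  have hppN0 : pp q N ≠ 0 := (pp_pos hq N).ne'
  have hndvd : ¬ (pp q N ∣ u) := fun hdvd =>
    absurd (Nat.le_of_dvd (Nat.pos_of_ne_zero hune) hdvd) (by omega)
  have hex : ∃ ℓ : ℕ, u.factorization ℓ < (pp q N).factorization ℓ := by
    by_contra hcon
    push_neg at hcon
    exact hndvd ((Nat.factorization_le_iff_dvd hppN0 hune).1 (Finsupp.le_def.2 hcon))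
  obtain ⟨ℓ, hℓlt⟩ := hex
  have hℓprime : ℓ.Prime := by
    have h1 : ℓ ∈ (pp q N).factorization.support := Finsupp.mem_support_iff.2 (by omega)
    rw [Nat.support_factorization] at h1
    exact Nat.prime_of_mem_primeFactors h1
  -- the stable exponent E
  obtain ⟨n0, hn0⟩ := (hfin ℓ hℓprime).bddAbove
  set n1 : ℕ := max N n0 with hn1
  set E : ℕ := (pp q n1).factorization ℓ with hE
  have hstab : ∀ j, n1 ≤ j → (pp q j).factorization ℓ = E := by
    intro j hj
    induction j, hj using Nat.le_induction with
    | base => rfl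
    | succ j hj ih =>
      have hsplit : pp q (j+1) = pp q j * q (j+1) := by simp [pp, Finset.prod_range_succ]
      have hqnd : ¬ ℓ ∣ q (j+1) := by
        intro hd
        have : j + 1 ≤ n0 := hn0 hd
        omega
      rw [hsplit, Nat.factorization_mul (pp_pos hq j).ne' (by have := hq (j+1); omega),
        Finsupp.add_apply, Nat.factorization_eq_zero_of_not_dvd hqnd, ih, add_zero]
  have hEub : ∀ j, (pp q j).factorization ℓ ≤ E := by
    intro j
    rcases le_or_gt j n1 with hj | hj
    · exact Finsupp.le_def.1 ((Nat.factorization_le_iff_dvd (pp_pos hq j).ne'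
        (pp_pos hq n1).ne').2 (pp_dvd_of_le hj)) ℓ
    · rw [hstab j (le_of_lt hj)]
  have hNE : (pp q N).factorization ℓ ≤ E := hEub N
  -- the cyclic tower of height M = ℓ^E
  set M : ℕ := ℓ ^ E with hM
  have hM0 : M ≠ 0 := pow_ne_zero _ hℓprime.pos.ne'
  haveI : NeZero M := ⟨hM0⟩
  have hMdvd : M ∣ pp q n1 :=
    (Nat.Prime.pow_dvd_iff_le_factorization hℓprime (pp_pos hq n1).ne').2 le_rfl
  set κ : Odo q → ZMod M := fun x => ZMod.castHom hMdvd (ZMod M) (x.1 n1) with hκ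
  have hκR : ∀ (x : Odo q) (t : ℕ), κ ((odoR q)^[t] x) = κ x + (t : ZMod M) := by
    intro x t
    show ZMod.castHom hMdvd (ZMod M) (((odoR q)^[t] x).1 n1) = _
    rw [pi_R_iterate, map_add, map_natCast]
  set D : Set (Odo q) := κ ⁻¹' {0} with hD
  set A : ℕ → Set (Odo q) := fun i => (odoR q)^[i] '' D with hA
  have hA0 : A 0 = D := by simp [hA]
  have hAM : A M = D := by
    apply Set.Subset.antisymm
    · rintro _ ⟨x, hx, rfl⟩
      show κ ((odoR q)^[M] x) ∈ ({0} : Set (ZMod M))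
      rw [hκR, show κ x = 0 from hx, ZMod.natCast_self, add_zero]
      rfl
    · intro x hx
      refine ⟨(odoRinv q)^[M] x, ?_, R_iterate_Rinv_iterate M x⟩
      show κ ((odoRinv q)^[M] x) ∈ ({0} : Set (ZMod M))
      have h1 : κ ((odoR q)^[M] ((odoRinv q)^[M] x)) = κ ((odoRinv q)^[M] x) + (M : ZMod M) :=
        hκR _ M
      rw [R_iterate_Rinv_iterate M x, ZMod.natCast_self, add_zero] at h1
      rw [← h1]
      exact hx
  have hAcover : ∀ y : Odo q, ∃ i < M, y ∈ A i := by
    intro y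
    refine ⟨(κ y).val, ZMod.val_lt _, (odoRinv q)^[(κ y).val] y, ?_,
      R_iterate_Rinv_iterate _ y⟩
    show κ ((odoRinv q)^[(κ y).val] y) ∈ ({0} : Set (ZMod M))
    have h1 : κ ((odoR q)^[(κ y).val] ((odoRinv q)^[(κ y).val] y)) =
        κ ((odoRinv q)^[(κ y).val] y) + ((κ y).val : ZMod M) := hκR _ _
    rw [R_iterate_Rinv_iterate _ y, ZMod.natCast_rightInverse (κ y)] at h1
    have : κ ((odoRinv q)^[(κ y).val] y) = κ y - κ y := by
      rw [eq_sub_iff_add_eq, ← h1]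
    rw [this, sub_self]
    rfl
  have hAdisj : ∀ i < M, ∀ j < M, i ≠ j → A i ∩ A j = ∅ := by
    intro i hi j hj hij
    refine Set.eq_empty_iff_forall_notMem.2 fun z ⟨⟨x, hx, hxz⟩, ⟨y, hy, hyz⟩⟩ => ?_
    have h1 : κ z = (i : ZMod M) := by
      rw [← hxz, hκR, show κ x = 0 from hx, zero_add]
    have h2 : κ z = (j : ZMod M) := by
      rw [← hyz, hκR, show κ y = 0 from hy, zero_add]
    have : (i : ZMod M).val = (j : ZMod M).val := by rw [← h1, h2]
    rw [ZMod.val_cast_of_lt hi, ZMod.val_cast_of_lt hj] at this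
    exact hij this
  have hD0 : odoNat q 0 ∈ D := by
    show ZMod.castHom hMdvd (ZMod M) (((0:ℕ) : ZMod (pp q n1))) ∈ ({0} : Set (ZMod M))
    simp
  -- transport to C via φ
  set Φ : Odo q → Odo q := fun z => (odoR q)^[retTime (odoR q) C z] z with hΦ
  set B : ℕ → Set (Odo q) := fun i => φ '' (A i) with hB
  have hBC : ∀ i, B i ⊆ C := by
    intro i z hz
    rw [← hrange]
    exact ⟨hz.choose, hz.choose_spec.2⟩
  have hBsucc : ∀ i, B (i + 1) = Φ '' (B i) := by
    intro i
    have h1 : A (i+1) = odoR q '' (A i) := by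
      show (odoR q)^[i+1] '' D = _
      rw [Function.iterate_succ', Set.image_comp]
    show φ '' (A (i+1)) = Φ '' (φ '' (A i))
    rw [h1, Set.image_image φ (odoR q), Set.image_image Φ φ]
    exact Set.image_congr fun a _ => heq a
  have hBM : B M = B 0 := by rw [hB]; simp only [hAM, hA0]
  have hBdisj : ∀ i < M, ∀ j < M, i ≠ j → B i ∩ B j = ∅ := by
    intro i hi j hj hij
    show φ '' (A i) ∩ φ '' (A j) = ∅
    rw [← Set.image_inter hinj, hAdisj i hi j hj hij, Set.image_empty]
  have hBcoverC : ∀ z ∈ C, ∃ i < M, z ∈ B i := by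
    intro z hz
    rw [← hrange] at hz
    obtain ⟨x, rfl⟩ := hz
    obtain ⟨i, hi, hxi⟩ := hAcover x
    exact ⟨i, hi, x, hxi, rfl⟩
  -- clopenness of the B i
  have hRcont : Continuous (odoR q) := by
    refine Continuous.subtype_mk ?_ _
    apply continuous_pi
    intro n
    show Continuous ((fun b : ZMod (pp q n) => b + 1) ∘ (fun x : Odo q => x.1 n))
    exact continuous_of_discreteTopology.comp (continuous_pi_n q n)
  have hDclosed : IsClosed D := by
    have : Continuous κ := continuous_of_discreteTopology.comp (continuous_pi_n q n1)
    exact ((isClopen_discrete ({0} : Set (ZMod M))).preimage this).1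
  have hBcompact : ∀ i, IsCompact (B i) := fun i =>
    ((hDclosed.isCompact.image (hRcont.iterate i)).image hcont)
  have hBclosed : ∀ i, IsClosed (B i) := fun i => (hBcompact i).isClosed
  have hBopen : ∀ i < M, IsOpen (B i) := by
    intro i hi
    have hBieq : B i = C ∩ (⋃ j ∈ (Finset.range M).erase i, B j)ᶜ := by
      apply Set.Subset.antisymm
      · intro z hz
        refine ⟨hBC i hz, fun hz' => ?_⟩
        obtain ⟨j, hj, hzj⟩ := Set.mem_iUnion₂.1 hz'
        have hji := Finset.ne_of_mem_erase hj
        have hjM := Finset.mem_range.1 (Finset.mem_of_mem_erase hj)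
        exact Set.eq_empty_iff_forall_notMem.1 (hBdisj j hjM i hi hji) z ⟨hzj, hz⟩
      · rintro z ⟨hzC, hznot⟩
        obtain ⟨j, hj, hzj⟩ := hBcoverC z hzC
        rcases eq_or_ne j i with rfl | hji
        · exact hzj
        · exact (hznot (Set.mem_iUnion₂.2 ⟨j, Finset.mem_erase.2
            ⟨hji, Finset.mem_range.2 hj⟩, hzj⟩)).elim
    rw [hBieq]
    have hcl : IsClosed (⋃ j ∈ (Finset.range M).erase i, B j) :=
      Set.Finite.isClosed_biUnion (((Finset.range M).erase i).finite_toSet)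
        (fun j _ => hBclosed j)
    exact hC.2.inter hcl.isOpen_compl
  have hBclopen : ∀ i < M, IsClopen (B i) := fun i hi => ⟨hBclosed i, hBopen i hi⟩
  -- common level N'
  have hlev : ∀ i : ℕ, ∃ L, i < M → ∀ x y : Odo q, x ∈ B i → y.1 L = x.1 L → y ∈ B i := by
    intro i
    by_cases hi : i < M
    · obtain ⟨L, hL⟩ := clopen_determined hq (hBclopen i hi)
      exact ⟨L, fun _ => hL⟩
    · exact ⟨0, fun h => absurd h hi⟩
  choose Lf hLf using hlev
  set N' : ℕ := N ⊔ (Finset.range M).sup Lf with hN'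
  have hNN' : N ≤ N' := le_max_left _ _
  set π' : Odo q → ZMod (pp q N') := fun z => z.1 N' with hπ'
  have hdetN' : ∀ x y : Odo q, x ∈ C → y.1 N' = x.1 N' → y ∈ C :=
    determined_mono hq hNN' hdetN
  set U' : Set (ZMod (pp q N')) := π' '' C with hU'
  have hCU' : C = π' ⁻¹' U' := determined_preimage hdetN'
  set T : ℕ → Set (ZMod (pp q N')) := fun i => π' '' (B i) with hT
  have hBT : ∀ i < M, B i = π' ⁻¹' (T i) := by
    intro i hi
    exact determined_preimage (determined_mono hq
      (le_trans (Finset.le_sup (Finset.mem_range.2 hi)) (le_max_right _ _)) (hLf i hi))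
  -- return time at level N'
  set rt : ZMod (pp q N') → ℕ := fun a => sInf {t : ℕ | 0 < t ∧ a + (t : ZMod (pp q N')) ∈ U'}
    with hrt
  set σ : ZMod (pp q N') → ZMod (pp q N') := fun a => a + (rt a : ZMod (pp q N')) with hσ
  have hΦπ : ∀ z : Odo q, π' (Φ z) = σ (π' z) := by
    intro z
    have hseteq : {n : ℕ | 0 < n ∧ (odoR q)^[n] z ∈ C} =
        {t : ℕ | 0 < t ∧ π' z + (t : ZMod (pp q N')) ∈ U'} := by
      ext t
      simp only [Set.mem_setOf_eq, and_congr_right_iff]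
      intro _
      rw [hCU']
      show ((odoR q)^[t] z).1 N' ∈ U' ↔ _
      rw [pi_R_iterate]
    have h2 : retTime (odoR q) C z = rt (π' z) := by
      unfold retTime
      rw [hseteq]
    show ((odoR q)^[retTime (odoR q) C z] z).1 N' = _
    rw [pi_R_iterate, h2]
  have hTσ : ∀ i, T (i + 1) ⊆ σ '' (T i) := by
    intro i b hb
    obtain ⟨x, hx, rfl⟩ := hb
    rw [hBsucc i] at hx
    obtain ⟨w, hw, rfl⟩ := hx
    exact ⟨π' w, ⟨w, hw, rfl⟩, (hΦπ w).symm⟩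
  -- cardinalities
  set c : ℕ → ℕ := fun i => (T i).ncard with hc
  have hcdec : ∀ i, c (i + 1) ≤ c i := fun i =>
    le_trans (Set.ncard_le_ncard (hTσ i) (Set.toFinite _)) (Set.ncard_image_le (Set.toFinite _))
  have hanti : ∀ i j, i ≤ j → c j ≤ c i := by
    intro i j hij
    induction j, hij using Nat.le_induction with
    | base => exact le_rfl
    | succ j hj ih => exact le_trans (hcdec j) ih
  have hTM : c M = c 0 := by
    show (T M).ncard = (T 0).ncard
    rw [hT]
    simp only [hBM]
  have hceq : ∀ i < M, c i = c 0 := fun i hi =>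
    le_antisymm (hanti 0 i (Nat.zero_le i)) (hTM ▸ hanti i M (le_of_lt hi))
  -- U' is the disjoint union of the T i
  have hUT : U' = ⋃ i ∈ Finset.range M, T i := by
    apply Set.Subset.antisymm
    · rintro _ ⟨z, hz, rfl⟩
      obtain ⟨i, hi, hzi⟩ := hBcoverC z hz
      exact Set.mem_iUnion₂.2 ⟨i, Finset.mem_range.2 hi, ⟨z, hzi, rfl⟩⟩
    · intro b hb
      obtain ⟨i, hi, hbi⟩ := Set.mem_iUnion₂.1 hb
      obtain ⟨z, hz, rfl⟩ := hbi
      exact ⟨z, hBC i hz, rfl⟩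
  have hTdisj : ∀ i ∈ Finset.range M, ∀ j ∈ Finset.range M, i ≠ j → T i ∩ T j = ∅ := by
    intro i hi j hj hij
    refine Set.eq_empty_iff_forall_notMem.2 fun b ⟨hbi, hbj⟩ => ?_
    obtain ⟨x, hx⟩ := pi_surjective hq N' b
    have hx' : π' x = b := hx
    have hxi : x ∈ B i := by
      rw [hBT i (Finset.mem_range.1 hi)]
      show π' x ∈ T i
      rw [hx']; exact hbi
    have hxj : x ∈ B j := by
      rw [hBT j (Finset.mem_range.1 hj)]
      show π' x ∈ T j
      rw [hx']; exact hbj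
    exact Set.eq_empty_iff_forall_notMem.1
      (hBdisj i (Finset.mem_range.1 hi) j (Finset.mem_range.1 hj) hij) x ⟨hxi, hxj⟩
  have hsum : U'.ncard = M * c 0 := by
    rw [hUT, ncard_pairwise_biUnion _ _ hTdisj]
    rw [Finset.sum_congr rfl (fun i hi => hceq i (Finset.mem_range.1 hi))]
    rw [Finset.sum_const, Finset.card_range, smul_eq_mul]
  -- fiber counting
  set f := ZMod.castHom (pp_dvd_of_le (q := q) hNN') (ZMod (pp q N)) with hfdef
  have hfval : ∀ b : ZMod (pp q N'), f b = (((b.val : ℕ)) : ZMod (pp q N)) := by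
    intro b
    conv_lhs => rw [show b = ((b.val : ℕ) : ZMod (pp q N')) from
      (ZMod.natCast_rightInverse b).symm]
    rw [map_natCast]
  have hfπ : ∀ x : Odo q, f (x.1 N') = x.1 N := by
    intro x
    rw [hfval, odo_compat hq x hNN']
  have hfU : U' = f ⁻¹' U := by
    apply Set.Subset.antisymm
    · rintro _ ⟨z, hz, rfl⟩
      show f (z.1 N') ∈ U
      rw [hfπ]
      exact ⟨z, hz, rfl⟩
    · intro b hb
      obtain ⟨x, hx⟩ := pi_surjective hq N' b
      have hx' : x.1 N' = b := hx
      have hxC : x ∈ C := by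
        rw [hCU]
        show x.1 N ∈ U
        rw [← hfπ x, hx']
        exact hb
      exact ⟨x, hxC, hx'⟩
  set K : ℕ := (f ⁻¹' {0}).ncard with hK
  have hcount1 : U'.ncard = u * K := by
    rw [hfU, ncard_preimage_castHom]
  have hcount2 : pp q N' = pp q N * K := by
    have h1 : (f ⁻¹' (Set.univ : Set (ZMod (pp q N)))).ncard =
        (Set.univ : Set (ZMod (pp q N))).ncard * K := ncard_preimage_castHom _ _
    rw [Set.preimage_univ, Set.ncard_univ, Set.ncard_univ, Nat.card_zmod, Nat.card_zmod] at h1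
    exact h1
  -- T 0 is nonempty
  have hc00 : c 0 ≠ 0 := by
    have hB0ne : (B 0).Nonempty := ⟨φ (odoNat q 0), odoNat q 0, hA0 ▸ hD0, rfl⟩
    have h2 : (T 0).Nonempty := hB0ne.image _
    have h3 := (Set.ncard_pos (Set.toFinite (T 0))).2 h2
    show (T 0).ncard ≠ 0
    omega
  have hK0 : K ≠ 0 := by
    intro h
    rw [h, Nat.mul_zero] at hcount2
    exact (pp_pos hq N').ne' hcount2
  -- the final valuation computation
  have e1 : M * c 0 = u * K := by rw [← hsum, hcount1]
  have hvM : M.factorization ℓ = E := by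
    rw [hM, hℓprime.factorization_pow, Finsupp.single_eq_same]
  have hveq1 : E + (c 0).factorization ℓ = u.factorization ℓ + K.factorization ℓ := by
    have := congrArg (fun g : ℕ →₀ ℕ => g ℓ) (congrArg Nat.factorization e1)
    rw [Nat.factorization_mul hM0 hc00, Nat.factorization_mul hune hK0] at this
    simpa [Finsupp.add_apply, hvM] using this
  have hveq2 : (pp q N).factorization ℓ + K.factorization ℓ ≤ E := by
    have := congrArg (fun g : ℕ →₀ ℕ => g ℓ) (congrArg Nat.factorization hcount2)
    rw [Nat.factorization_mul hppN0 hK0] at this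
    simp only [Finsupp.add_apply] at this
    rw [← this]
    exact hEub N'
  omega



theorem stmt8 (q : ℕ → ℕ) (hq : ∀ n, 2 ≤ q n) :
    (∃ C : Set (Odo q), IsClopen C ∧ C.Nonempty ∧ C ≠ Set.univ ∧
      ∃ φ : Odo q → Odo q, Continuous φ ∧ Function.Injective φ ∧ Set.range φ = C ∧
        ∀ x : Odo q, φ (odoR q x) = (odoR q)^[retTime (odoR q) C (φ x)] (φ x)) ↔
    (∃ ℓ : ℕ, ℓ.Prime ∧ {n : ℕ | ℓ ∣ q n}.Infinite) := by
  constructor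
  · rintro ⟨C, hC, hne, hnuniv, φ, hcont, hinj, hrange, heqn⟩
    by_contra hcon
    push_neg at hcon
    exact forward_dir hq C hC hne hnuniv φ hcont hinj hrange heqn
      (fun ℓ hℓ => hcon ℓ hℓ)
  · rintro ⟨ℓ, hℓ, hinf⟩
    exact reverse_dir hq hℓ hinf
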